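/- Let f ∈ ℚ((z⁻¹)) be a formal Laurent series that is not a rational function. Define a_0 = ⌊f⌋ (the polynomial part of f), f_1 = (f - a_0)^{-1}, and inductively a_n = ⌊f_n⌋, f_{n+1} = (f_n - a_n)^{-1}. Then f_n is well-defined (f_n ≠ a_n) for all n ≥ 1, deg(a_n) ≥ 1 for n ≥ 1, and the convergents p_n/q_n of [a_0, a_1, a_2, ...] converge to f in the metric on ℚ((z⁻¹)). -/

import Mathlib

noncomputable section
open Classical Polynomial

/-- The space ℚ((z⁻¹)) of formal Laurent series over ℚ (variable X = z⁻¹). -/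
abbrev LS := LaurentSeries ℚ

/-- Degree of a formal Laurent series in z (minus the order in X = z⁻¹). -/
def ldeg (f : LS) : ℤ := -f.order

/-- The metric d(f,g) = 2^{deg(f-g)} for f ≠ g, and 0 otherwise. -/
def Dmet (f g : LS) : ℝ := if f = g then 0 else (2 : ℝ) ^ ldeg (f - g)

/-- The element z of ℚ((z⁻¹)): the series X⁻¹ where X = z⁻¹. -/
def Zl : LS := HahnSeries.single (-1 : ℤ) (1 : ℚ)

/-- The polynomial part ⌊f⌋ of a formal Laurent series: the terms with
nonnegative powers of z, i.e. nonpositive exponents of X = z⁻¹. -/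
def polyPart (f : LS) : LS :=
  ⟨fun n => if n ≤ 0 then f.coeff n else 0, by
    refine f.isPWO_support'.mono fun n hn => ?_
    simp only [Function.mem_support] at hn ⊢
    intro h; apply hn; split <;> simp [h]⟩

/-- f is a rational function, i.e. a quotient of two polynomials in ℚ[z]. -/
def IsRatFn (f : LS) : Prop :=
  ∃ P Q : Polynomial ℚ, Q ≠ 0 ∧ f * Polynomial.aeval Zl Q = Polynomial.aeval Zl P

/-- The sequence f₀ = f, f_{n+1} = (fₙ - ⌊fₙ⌋)⁻¹ of the continued fraction
algorithm; the partial quotients are aₙ = ⌊fₙ⌋. -/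
def Fseq (f : LS) : ℕ → LS
  | 0 => f
  | n + 1 => (Fseq f n - polyPart (Fseq f n))⁻¹

/-- Continued fraction numerators: p₀ = a₀, p₁ = a₁a₀ + 1, pₙ = aₙpₙ₋₁ + pₙ₋₂. -/
def cfP (a : ℕ → LS) : ℕ → LS
  | 0 => a 0
  | 1 => a 1 * a 0 + 1
  | n + 2 => a (n + 2) * cfP a (n + 1) + cfP a n

/-- Continued fraction denominators: q₀ = 1, q₁ = a₁, qₙ = aₙqₙ₋₁ + qₙ₋₂. -/
def cfQ (a : ℕ → LS) : ℕ → LS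
  | 0 => 1
  | 1 => a 1
  | n + 2 => a (n + 2) * cfQ a (n + 1) + cfQ a n

namespace CFA

lemma polyPart_coeff (f : LS) (n : ℤ) :
    (polyPart f).coeff n = if n ≤ 0 then f.coeff n else 0 := rfl

lemma order_eq_of (x : LS) (d : ℤ) (h1 : x.coeff d ≠ 0)
    (h2 : ∀ m, m < d → x.coeff m = 0) : x.order = d := by
  have hx : x ≠ 0 := fun h => h1 (by simp [h])
  refine le_antisymm (HahnSeries.order_le_of_coeff_ne_zero h1) ?_
  by_contra h
  push_neg at h
  exact (HahnSeries.coeff_order_eq_zero.not.2 hx) (h2 _ h)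

lemma one_le_order_sub_polyPart {x : LS} (h : x ≠ polyPart x) :
    1 ≤ (x - polyPart x).order := by
  have hne : x - polyPart x ≠ 0 := sub_ne_zero.mpr h
  by_contra hlt
  push_neg at hlt
  apply (HahnSeries.coeff_order_eq_zero.not.2 hne)
  rw [HahnSeries.coeff_sub, polyPart_coeff, if_pos (by omega : (x - polyPart x).order ≤ 0), sub_self]

lemma polyPart_order_eq {x : LS} (hx : x ≠ 0) (h : x.order ≤ 0) :
    (polyPart x).order = x.order := by
  apply order_eq_of
  · rw [polyPart_coeff, if_pos h]; exact (HahnSeries.coeff_order_eq_zero.not.2 hx)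
  · intro m hm
    rw [polyPart_coeff]
    split
    · exact HahnSeries.coeff_eq_zero_of_lt_order hm
    · rfl

lemma polyPart_ne_zero {x : LS} (hx : x ≠ 0) (h : x.order ≤ 0) : polyPart x ≠ 0 := by
  intro h0
  apply (HahnSeries.coeff_order_eq_zero.not.2 hx)
  have h1 : (polyPart x).coeff x.order = x.coeff x.order := by
    rw [polyPart_coeff, if_pos h]
  rw [h0] at h1
  simpa using h1.symm

lemma order_add_left {x y : LS} (hx : x ≠ 0) (hy : y = 0 ∨ x.order < y.order) :
    x + y ≠ 0 ∧ (x + y).order = x.order := by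
  rcases hy with rfl | hlt
  · constructor <;> simp [hx]
  · have hcoeff : (x + y).coeff x.order ≠ 0 := by
      rw [HahnSeries.coeff_add, HahnSeries.coeff_eq_zero_of_lt_order hlt, add_zero]
      exact (HahnSeries.coeff_order_eq_zero.not.2 hx)
    have hne : x + y ≠ 0 := fun h => hcoeff (by simp [h])
    refine ⟨hne, order_eq_of _ _ hcoeff fun m hm => ?_⟩
    rw [HahnSeries.coeff_add, HahnSeries.coeff_eq_zero_of_lt_order hm,
      HahnSeries.coeff_eq_zero_of_lt_order (hm.trans hlt), add_zero]

lemma order_inv {x : LS} (hx : x ≠ 0) : (x⁻¹).order = -x.order := by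
  have h := HahnSeries.order_mul hx (inv_ne_zero hx)
  rw [mul_inv_cancel₀ hx, HahnSeries.order_one] at h
  omega

lemma Zl_pow (k : ℕ) : Zl ^ k = HahnSeries.single (-(k : ℤ)) (1 : ℚ) := by
  rw [Zl, HahnSeries.single_pow, one_pow]
  congr 1
  rw [nsmul_eq_mul]
  ring

lemma coeff_finsetSum {σ : Type*} (s : Finset σ) (g : σ → LS) (n : ℤ) :
    (∑ i ∈ s, g i).coeff n = ∑ i ∈ s, (g i).coeff n := by
  classical
  induction s using Finset.cons_induction with
  | empty => simp
  | cons i s hi ih => rw [Finset.sum_cons, Finset.sum_cons, HahnSeries.coeff_add, ih]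

lemma algebraMap_LS (c : ℚ) : algebraMap ℚ LS c = HahnSeries.single (0 : ℤ) c := by
  have h : (algebraMap ℚ LS) = (HahnSeries.C : ℚ →+* LS) := RingHom.ext_rat _ _
  rw [h, HahnSeries.C_apply]

lemma aeval_Zl_term_coeff (c : ℚ) (i : ℕ) (n : ℤ) :
    ((algebraMap ℚ LS) c * Zl ^ i).coeff n = if n = -(i : ℤ) then c else 0 := by
  rw [algebraMap_LS, Zl_pow, HahnSeries.single_mul_single, zero_add, mul_one,
    HahnSeries.coeff_single]
  by_cases h : n = -(i : ℤ) <;> simp [h]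

lemma aeval_Zl_coeff (P : Polynomial ℚ) (k : ℕ) :
    (Polynomial.aeval Zl P).coeff (-(k : ℤ)) = P.coeff k := by
  rw [Polynomial.aeval_def, Polynomial.eval₂_eq_sum, Polynomial.sum_def, coeff_finsetSum]
  simp only [aeval_Zl_term_coeff]
  by_cases hk : k ∈ P.support
  · rw [Finset.sum_eq_single k]
    · rw [if_pos rfl]
    · intro i _ hik
      rw [if_neg (by intro h; exact hik (by omega))]
    · intro h; exact absurd hk h
  · rw [Finset.sum_eq_zero, Polynomial.notMem_support_iff.mp hk]
    intro i hi
    have hik : i ≠ k := fun h => hk (h ▸ hi)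
    rw [if_neg (by omega)]

lemma aeval_Zl_ne_zero {Q : Polynomial ℚ} (hQ : Q ≠ 0) : Polynomial.aeval Zl Q ≠ 0 := by
  intro h
  have h2 := aeval_Zl_coeff Q Q.natDegree
  rw [h, HahnSeries.coeff_zero] at h2
  exact hQ (Polynomial.leadingCoeff_eq_zero.mp h2.symm)

lemma isRatFn_aeval (P : Polynomial ℚ) : IsRatFn (Polynomial.aeval Zl P) :=
  ⟨P, 1, one_ne_zero, by simp⟩

lemma isRatFn_add {x y : LS} (hx : IsRatFn x) (hy : IsRatFn y) : IsRatFn (x + y) := by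
  obtain ⟨P1, Q1, hQ1, h1⟩ := hx
  obtain ⟨P2, Q2, hQ2, h2⟩ := hy
  refine ⟨P1 * Q2 + P2 * Q1, Q1 * Q2, mul_ne_zero hQ1 hQ2, ?_⟩
  simp only [map_mul, map_add]
  linear_combination (Polynomial.aeval Zl Q2) * h1 + (Polynomial.aeval Zl Q1) * h2

lemma isRatFn_inv {x : LS} (hx : IsRatFn x) : IsRatFn x⁻¹ := by
  by_cases h0 : x = 0
  · exact ⟨0, 1, one_ne_zero, by simp [h0]⟩
  obtain ⟨P, Q, hQ, h⟩ := hx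
  have hP : P ≠ 0 := by
    intro hP0
    rw [hP0, map_zero] at h
    rcases mul_eq_zero.mp h with h' | h'
    · exact h0 h'
    · exact aeval_Zl_ne_zero hQ h'
  refine ⟨Q, P, hP, ?_⟩
  calc x⁻¹ * Polynomial.aeval Zl P = x⁻¹ * (x * Polynomial.aeval Zl Q) := by rw [h]
    _ = Polynomial.aeval Zl Q := by field_simp

lemma polyPart_eq_aeval (x : LS) : ∃ P : Polynomial ℚ, polyPart x = Polynomial.aeval Zl P := by
  by_cases hx : x = 0
  · refine ⟨0, ?_⟩
    ext n
    simp [polyPart_coeff, hx]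
  by_cases hord : x.order ≤ 0
  · have hK0 : ((-x.order).toNat : ℤ) = -x.order := Int.toNat_of_nonneg (by omega)
    refine ⟨∑ k ∈ Finset.range ((-x.order).toNat + 1),
      Polynomial.C (x.coeff (-(k : ℤ))) * Polynomial.X ^ k, ?_⟩
    ext n
    rw [map_sum, coeff_finsetSum, polyPart_coeff]
    have hterm : ∀ k : ℕ,
        (Polynomial.aeval Zl (Polynomial.C (x.coeff (-(k : ℤ))) * Polynomial.X ^ k)).coeff n
          = if n = -(k : ℤ) then x.coeff (-(k : ℤ)) else 0 := by
      intro k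
      rw [map_mul, Polynomial.aeval_C, Polynomial.aeval_X_pow, aeval_Zl_term_coeff]
    simp only [hterm]
    by_cases hn : n ≤ 0
    · by_cases hK : -n ≤ ((-x.order).toNat : ℤ)
      · rw [if_pos hn, Finset.sum_eq_single (-n).toNat]
        · rw [if_pos (by omega)]
          congr 1
          omega
        · intro b _ hb
          rw [if_neg (by omega)]
        · intro hmem
          exact absurd (Finset.mem_range.mpr (by omega)) hmem
      · rw [if_pos hn, HahnSeries.coeff_eq_zero_of_lt_order (by omega), Finset.sum_eq_zero]
        intro b hb
        rw [Finset.mem_range] at hb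
        rw [if_neg (by omega)]
    · rw [if_neg hn, Finset.sum_eq_zero]
      intro b _
      rw [if_neg (by omega)]
  · refine ⟨0, ?_⟩
    ext n
    simp only [polyPart_coeff, map_zero, HahnSeries.coeff_zero]
    split
    · exact HahnSeries.coeff_eq_zero_of_lt_order (by omega)
    · rfl

lemma isRatFn_polyPart (x : LS) : IsRatFn (polyPart x) := by
  obtain ⟨P, hP⟩ := polyPart_eq_aeval x
  rw [hP]; exact isRatFn_aeval P

lemma not_ratFn_Fseq (f : LS) (hf : ¬ IsRatFn f) : ∀ n, ¬ IsRatFn (Fseq f n) := by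
  intro n
  induction n with
  | zero => exact hf
  | succ n ih =>
    intro hrat
    apply ih
    have hne : Fseq f n - polyPart (Fseq f n) ≠ 0 := by
      rw [sub_ne_zero]
      intro he
      exact ih (he ▸ isRatFn_polyPart (Fseq f n))
    have heq : Fseq f n = polyPart (Fseq f n) + (Fseq f (n + 1))⁻¹ := by
      rw [show Fseq f (n + 1) = (Fseq f n - polyPart (Fseq f n))⁻¹ from rfl, inv_inv]
      ring
    rw [heq]
    exact isRatFn_add (isRatFn_polyPart _) (isRatFn_inv hrat)

lemma Fseq_ne_polyPart (f : LS) (hf : ¬ IsRatFn f) (n : ℕ) :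
    Fseq f n ≠ polyPart (Fseq f n) := by
  intro he
  exact not_ratFn_Fseq f hf n (he ▸ isRatFn_polyPart (Fseq f n))

lemma Fseq_succ_ne_zero (f : LS) (hf : ¬ IsRatFn f) (n : ℕ) : Fseq f (n + 1) ≠ 0 :=
  inv_ne_zero (sub_ne_zero.mpr (Fseq_ne_polyPart f hf n))

lemma order_Fseq_succ (f : LS) (hf : ¬ IsRatFn f) (n : ℕ) : (Fseq f (n + 1)).order ≤ -1 := by
  have h1 := one_le_order_sub_polyPart (Fseq_ne_polyPart f hf n)
  rw [show Fseq f (n + 1) = (Fseq f n - polyPart (Fseq f n))⁻¹ from rfl,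
    order_inv (sub_ne_zero.mpr (Fseq_ne_polyPart f hf n))]
  omega

end CFA

namespace CFA

def aSeq (f : LS) : ℕ → LS := fun k => polyPart (Fseq f k)

def pSeq (a : ℕ → LS) : ℕ → LS
  | 0 => 1
  | 1 => a 0
  | n + 2 => a (n + 1) * pSeq a (n + 1) + pSeq a n

def qSeq (a : ℕ → LS) : ℕ → LS
  | 0 => 0
  | 1 => 1
  | n + 2 => a (n + 1) * qSeq a (n + 1) + qSeq a n

lemma aSeq_succ_ne_zero (f : LS) (hf : ¬ IsRatFn f) (n : ℕ) : aSeq f (n + 1) ≠ 0 :=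
  polyPart_ne_zero (Fseq_succ_ne_zero f hf n) (by have := order_Fseq_succ f hf n; omega)

lemma aSeq_succ_order (f : LS) (hf : ¬ IsRatFn f) (n : ℕ) :
    (aSeq f (n + 1)).order = (Fseq f (n + 1)).order :=
  polyPart_order_eq (Fseq_succ_ne_zero f hf n) (by have := order_Fseq_succ f hf n; omega)

lemma aSeq_succ_order_le (f : LS) (hf : ¬ IsRatFn f) (n : ℕ) :
    (aSeq f (n + 1)).order ≤ -1 := by
  rw [aSeq_succ_order f hf n]; exact order_Fseq_succ f hf n

lemma qSeq_facts (f : LS) (hf : ¬ IsRatFn f) : ∀ n : ℕ,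
    qSeq (aSeq f) (n + 1) ≠ 0 ∧ (qSeq (aSeq f) (n + 1)).order ≤ -(n : ℤ) ∧
    (qSeq (aSeq f) n = 0 ∨ (qSeq (aSeq f) (n + 1)).order < (qSeq (aSeq f) n).order) := by
  intro n
  induction n with
  | zero =>
    refine ⟨one_ne_zero, by rw [show qSeq (aSeq f) 1 = 1 from rfl, HahnSeries.order_one]; simp, Or.inl rfl⟩
  | succ n ih =>
    obtain ⟨hq1, hord, hcmp⟩ := ih
    have ha_ne := aSeq_succ_ne_zero f hf n
    have ha_ord := aSeq_succ_order_le f hf n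
    have hx_ne : aSeq f (n + 1) * qSeq (aSeq f) (n + 1) ≠ 0 := mul_ne_zero ha_ne hq1
    have hx_ord : (aSeq f (n + 1) * qSeq (aSeq f) (n + 1)).order
        = (aSeq f (n + 1)).order + (qSeq (aSeq f) (n + 1)).order :=
      HahnSeries.order_mul ha_ne hq1
    have hy : qSeq (aSeq f) n = 0 ∨
        (aSeq f (n + 1) * qSeq (aSeq f) (n + 1)).order < (qSeq (aSeq f) n).order := by
      rcases hcmp with h | h
      · exact Or.inl h
      · exact Or.inr (by omega)
    obtain ⟨h1, h2⟩ := order_add_left hx_ne hy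
    have hdef : qSeq (aSeq f) (n + 2)
        = aSeq f (n + 1) * qSeq (aSeq f) (n + 1) + qSeq (aSeq f) n := rfl
    refine ⟨by rw [hdef]; exact h1, by rw [hdef, h2]; push_cast; omega, Or.inr ?_⟩
    rw [hdef, h2]
    omega

lemma keyId (f : LS) (hf : ¬ IsRatFn f) : ∀ n : ℕ,
    f * (Fseq f (n + 1) * qSeq (aSeq f) (n + 1) + qSeq (aSeq f) n)
      = Fseq f (n + 1) * pSeq (aSeq f) (n + 1) + pSeq (aSeq f) n := by
  intro n
  induction n with
  | zero =>
    have hinv : Fseq f 1 * (Fseq f 0 - polyPart (Fseq f 0)) = 1 := by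
      rw [show Fseq f 1 = (Fseq f 0 - polyPart (Fseq f 0))⁻¹ from rfl]
      exact inv_mul_cancel₀ (sub_ne_zero.mpr (Fseq_ne_polyPart f hf 0))
    show f * (Fseq f 1 * 1 + 0) = Fseq f 1 * aSeq f 0 + 1
    have hf0 : Fseq f 0 = f := rfl
    rw [hf0] at hinv
    rw [show aSeq f 0 = polyPart f from rfl]
    linear_combination hinv
  | succ n ih =>
    have hinv : Fseq f (n + 2) * (Fseq f (n + 1) - polyPart (Fseq f (n + 1))) = 1 := by
      rw [show Fseq f (n + 2) = (Fseq f (n + 1) - polyPart (Fseq f (n + 1)))⁻¹ from rfl]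
      exact inv_mul_cancel₀ (sub_ne_zero.mpr (Fseq_ne_polyPart f hf (n + 1)))
    have hq : qSeq (aSeq f) (n + 2)
        = aSeq f (n + 1) * qSeq (aSeq f) (n + 1) + qSeq (aSeq f) n := rfl
    have hp : pSeq (aSeq f) (n + 2)
        = aSeq f (n + 1) * pSeq (aSeq f) (n + 1) + pSeq (aSeq f) n := rfl
    have ha : aSeq f (n + 1) = polyPart (Fseq f (n + 1)) := rfl
    rw [hq, hp, ha]
    rw [ha] at *
    linear_combination (Fseq f (n + 2)) * ih
      - (f * qSeq (aSeq f) (n + 1) - pSeq (aSeq f) (n + 1)) * hinv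

lemma detId (a : ℕ → LS) : ∀ n : ℕ,
    pSeq a (n + 1) * qSeq a n - pSeq a n * qSeq a (n + 1) = (-1 : LS) ^ (n + 1) := by
  intro n
  induction n with
  | zero =>
    show a 0 * 0 - 1 * 1 = (-1 : LS) ^ 1
    ring
  | succ n ih =>
    have hq : qSeq a (n + 2) = a (n + 1) * qSeq a (n + 1) + qSeq a n := rfl
    have hp : pSeq a (n + 2) = a (n + 1) * pSeq a (n + 1) + pSeq a n := rfl
    rw [hq, hp, pow_succ]
    linear_combination (-1 : LS) * ih

lemma cfP_eq (a : ℕ → LS) : ∀ n : ℕ, cfP a n = pSeq a (n + 1) := by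
  intro n
  induction n using Nat.strong_induction_on with
  | _ n ih =>
    match n with
    | 0 => rfl
    | 1 =>
      show a 1 * a 0 + 1 = a 1 * pSeq a 1 + pSeq a 0
      rfl
    | (m + 2) =>
      show a (m + 2) * cfP a (m + 1) + cfP a m = pSeq a (m + 3)
      rw [ih (m + 1) (by omega), ih m (by omega)]
      rfl

lemma cfQ_eq (a : ℕ → LS) : ∀ n : ℕ, cfQ a n = qSeq a (n + 1) := by
  intro n
  induction n using Nat.strong_induction_on with
  | _ n ih =>
    match n with
    | 0 => rfl
    | 1 =>
      show a 1 = a 1 * qSeq a 1 + qSeq a 0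
      rw [show qSeq a 1 = 1 from rfl, show qSeq a 0 = 0 from rfl]
      ring
    | (m + 2) =>
      show a (m + 2) * cfQ a (m + 1) + cfQ a m = qSeq a (m + 3)
      rw [ih (m + 1) (by omega), ih m (by omega)]
      rfl

end CFA


/-- continued fraction algorithm for Laurent series: if f is not a
rational function then the algorithm is well defined (fₙ ≠ aₙ for n ≥ 1), the
partial quotients aₙ = ⌊fₙ⌋ have degree ≥ 1 for n ≥ 1, and the convergents of
[a₀, a₁, a₂, ...] converge to f in the metric on ℚ((z⁻¹)). -/
theorem cf_algorithm (f : LS) (hf : ¬ IsRatFn f) :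
    (∀ n : ℕ, 1 ≤ n → Fseq f n ≠ polyPart (Fseq f n)) ∧
    (∀ n : ℕ, 1 ≤ n → 1 ≤ ldeg (polyPart (Fseq f n))) ∧
    (∀ ε : ℝ, 0 < ε → ∃ N : ℕ, ∀ n ≥ N,
      Dmet (cfP (fun k => polyPart (Fseq f k)) n / cfQ (fun k => polyPart (Fseq f k)) n) f < ε) := by
  refine ⟨fun n _ => CFA.Fseq_ne_polyPart f hf n, fun n hn => ?_, fun ε hε => ?_⟩
  · obtain ⟨m, rfl⟩ : ∃ m, n = m + 1 := ⟨n - 1, by omega⟩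
    have h2 : (polyPart (Fseq f (m + 1))).order ≤ -1 := CFA.aSeq_succ_order_le f hf m
    show (1 : ℤ) ≤ -(polyPart (Fseq f (m + 1))).order
    omega
  · obtain ⟨N, hN⟩ := exists_pow_lt_of_lt_one hε (by norm_num : (1 / 2 : ℝ) < 1)
    refine ⟨N, fun n hn => ?_⟩
    have ha : (fun k => polyPart (Fseq f k)) = CFA.aSeq f := rfl
    rw [ha, CFA.cfP_eq (CFA.aSeq f) n, CFA.cfQ_eq (CFA.aSeq f) n]
    obtain ⟨hq1, hq1ord, hqcmp⟩ := CFA.qSeq_facts f hf n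
    have hF_ne : Fseq f (n + 1) ≠ 0 := CFA.Fseq_succ_ne_zero f hf n
    have hF_ord : (Fseq f (n + 1)).order ≤ -1 := CFA.order_Fseq_succ f hf n
    have hmul : (Fseq f (n + 1) * CFA.qSeq (CFA.aSeq f) (n + 1)).order
        = (Fseq f (n + 1)).order + (CFA.qSeq (CFA.aSeq f) (n + 1)).order :=
      HahnSeries.order_mul hF_ne hq1
    have hy : CFA.qSeq (CFA.aSeq f) n = 0 ∨ (Fseq f (n + 1) * CFA.qSeq (CFA.aSeq f) (n + 1)).order < (CFA.qSeq (CFA.aSeq f) n).order := by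
      rcases hqcmp with h | h
      · exact Or.inl h
      · exact Or.inr (by omega)
    obtain ⟨hDne, hDord⟩ := CFA.order_add_left (mul_ne_zero hF_ne hq1) hy
    have hK := CFA.keyId f hf n
    have hdet := CFA.detId (CFA.aSeq f) n
    have key : (CFA.pSeq (CFA.aSeq f) (n + 1) - f * CFA.qSeq (CFA.aSeq f) (n + 1)) * (Fseq f (n + 1) * CFA.qSeq (CFA.aSeq f) (n + 1) + CFA.qSeq (CFA.aSeq f) n)
        = (-1 : LS) ^ (n + 1) := by
      linear_combination hdet - (CFA.qSeq (CFA.aSeq f) (n + 1)) * hK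
    have hu_ne : (Fseq f (n + 1) * CFA.qSeq (CFA.aSeq f) (n + 1) + CFA.qSeq (CFA.aSeq f) n) * CFA.qSeq (CFA.aSeq f) (n + 1) ≠ 0 := mul_ne_zero hDne hq1
    have h1 : CFA.pSeq (CFA.aSeq f) (n + 1) / CFA.qSeq (CFA.aSeq f) (n + 1) - f = (CFA.pSeq (CFA.aSeq f) (n + 1) - f * CFA.qSeq (CFA.aSeq f) (n + 1)) / CFA.qSeq (CFA.aSeq f) (n + 1) := by
      rw [sub_div]
      congr 1
      rw [mul_div_assoc, div_self hq1, mul_one]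
    have h2 : CFA.pSeq (CFA.aSeq f) (n + 1) - f * CFA.qSeq (CFA.aSeq f) (n + 1)
        = (-1 : LS) ^ (n + 1) * (Fseq f (n + 1) * CFA.qSeq (CFA.aSeq f) (n + 1) + CFA.qSeq (CFA.aSeq f) n)⁻¹ := by
      rw [← eq_div_iff hDne] at key
      rw [key, div_eq_mul_inv, mul_comm]
    have hdiff : CFA.pSeq (CFA.aSeq f) (n + 1) / CFA.qSeq (CFA.aSeq f) (n + 1) - f
        = (-1 : LS) ^ (n + 1) * ((Fseq f (n + 1) * CFA.qSeq (CFA.aSeq f) (n + 1) + CFA.qSeq (CFA.aSeq f) n) * CFA.qSeq (CFA.aSeq f) (n + 1))⁻¹ := by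
      rw [h1, h2, mul_inv, div_eq_mul_inv, mul_assoc]
    have hinv_ord : (((Fseq f (n + 1) * CFA.qSeq (CFA.aSeq f) (n + 1) + CFA.qSeq (CFA.aSeq f) n) * CFA.qSeq (CFA.aSeq f) (n + 1))⁻¹).order
        = -((Fseq f (n + 1) * CFA.qSeq (CFA.aSeq f) (n + 1) + CFA.qSeq (CFA.aSeq f) n) * CFA.qSeq (CFA.aSeq f) (n + 1)).order := CFA.order_inv hu_ne
    obtain ⟨hdne, hdord⟩ : (CFA.pSeq (CFA.aSeq f) (n + 1) / CFA.qSeq (CFA.aSeq f) (n + 1) - f ≠ 0) ∧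
        (CFA.pSeq (CFA.aSeq f) (n + 1) / CFA.qSeq (CFA.aSeq f) (n + 1) - f).order
          = -((Fseq f (n + 1) * CFA.qSeq (CFA.aSeq f) (n + 1) + CFA.qSeq (CFA.aSeq f) n) * CFA.qSeq (CFA.aSeq f) (n + 1)).order := by
      have hpne : ((-1 : LS)) ^ (n + 1) ≠ 0 := pow_ne_zero _ (neg_ne_zero.mpr one_ne_zero)
      have hpord : (((-1 : LS)) ^ (n + 1)).order = 0 := by
        rw [HahnSeries.order_pow, HahnSeries.order_neg, HahnSeries.order_one, smul_zero]
      refine ⟨by rw [hdiff]; exact mul_ne_zero hpne (inv_ne_zero hu_ne), ?_⟩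
      rw [hdiff, HahnSeries.order_mul hpne (inv_ne_zero hu_ne), hpord, hinv_ord, zero_add]
    rw [Dmet, if_neg (sub_ne_zero.mp hdne)]
    have humul : ((Fseq f (n + 1) * CFA.qSeq (CFA.aSeq f) (n + 1) + CFA.qSeq (CFA.aSeq f) n) * CFA.qSeq (CFA.aSeq f) (n + 1)).order
        = (Fseq f (n + 1) * CFA.qSeq (CFA.aSeq f) (n + 1) + CFA.qSeq (CFA.aSeq f) n).order + (CFA.qSeq (CFA.aSeq f) (n + 1)).order :=
      HahnSeries.order_mul hDne hq1
    have hldeg : ldeg (CFA.pSeq (CFA.aSeq f) (n + 1) / CFA.qSeq (CFA.aSeq f) (n + 1) - f) ≤ -(n : ℤ) := by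
      show -(CFA.pSeq (CFA.aSeq f) (n + 1) / CFA.qSeq (CFA.aSeq f) (n + 1) - f).order ≤ -(n : ℤ)
      omega
    calc (2 : ℝ) ^ ldeg (CFA.pSeq (CFA.aSeq f) (n + 1) / CFA.qSeq (CFA.aSeq f) (n + 1) - f)
        ≤ (2 : ℝ) ^ (-(n : ℤ)) := zpow_le_zpow_right₀ one_le_two hldeg
      _ = (1 / 2 : ℝ) ^ n := by rw [zpow_neg, zpow_natCast, one_div, inv_pow]
      _ ≤ (1 / 2 : ℝ) ^ N := pow_le_pow_of_le_one (by norm_num) (by norm_num) hn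
      _ < ε := hN
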